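/- Let X and Z be standard Borel spaces, P_X a probability measure on X, P_Z a probability measure on Z, and g : Z → X measurable. For every coupling π of P_X and g#P_Z (a probability measure on X × X with marginals P_X and g#P_Z), there exists a coupling ρ of P_X and P_Z (a probability measure on X × Z with marginals P_X and P_Z) such that the pushforward of ρ under the map (x, z) ↦ (x, g(z)) equals π; consequently ∫ c dπ = ∫ c(x, g(z)) dρ(x, z) for every measurable c : X × X → [0,∞]. -/

import Mathlib

open MeasureTheory ENNReal
open scoped ProbabilityTheory

/-- Any coupling `π` of `P_X` and `g#P_Z` lifts to a coupling `ρ` of `P_X` and `P_Z`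
whose pushforward under `(x, z) ↦ (x, g z)` is `π`; consequently
`∫ c dπ = ∫ c (x, g z) dρ (x, z)` for every measurable cost `c`. -/
theorem exists_coupling_lift
    {X Z : Type*} [MeasurableSpace X] [StandardBorelSpace X]
    [MeasurableSpace Z] [StandardBorelSpace Z]
    (P_X : Measure X) [IsProbabilityMeasure P_X]
    (P_Z : Measure Z) [IsProbabilityMeasure P_Z]
    (g : Z → X) (hg : Measurable g)
    (π : Measure (X × X)) [IsProbabilityMeasure π]
    (hπ₁ : π.map Prod.fst = P_X) (hπ₂ : π.map Prod.snd = P_Z.map g) :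
    ∃ ρ : Measure (X × Z), IsProbabilityMeasure ρ ∧
      ρ.map Prod.fst = P_X ∧ ρ.map Prod.snd = P_Z ∧
      ρ.map (fun p => (p.1, g p.2)) = π ∧
      ∀ c : X × X → ℝ≥0∞, Measurable c →
        ∫⁻ p, c p ∂π = ∫⁻ p, c (p.1, g p.2) ∂ρ := by
  classical
  letI := upgradeStandardBorel X
  -- the measure of `(g z, z)`
  set μ : Measure (X × Z) := P_Z.map (fun z => (g z, z)) with hμdef
  have hgz : Measurable (fun z : Z => (g z, z)) := hg.prodMk measurable_id
  haveI : IsProbabilityMeasure μ := Measure.isProbabilityMeasure_map hgz.aemeasurable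
  have hμfst : μ.fst = P_Z.map g := by
    rw [Measure.fst, hμdef, Measure.map_map measurable_fst hgz]
    rfl
  haveI : Nonempty Z := Measure.nonempty_of_neZero P_Z
  set κ := μ.condKernel with hκdef
  have hdis : μ.fst ⊗ₘ κ = μ := μ.disintegrate μ.condKernel
  -- the diagonal-type set
  have hD : MeasurableSet {p : X × Z | g p.2 = p.1} := by
    have h1 : StronglyMeasurable (fun p : X × Z => g p.2) :=
      (hg.comp measurable_snd).stronglyMeasurable
    have h2 : StronglyMeasurable (fun p : X × Z => p.1) :=
      measurable_fst.stronglyMeasurable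
    exact h1.measurableSet_eq_fun h2
  have hμD : μ {p : X × Z | g p.2 = p.1} = 1 := by
    rw [hμdef, Measure.map_apply hgz hD]
    simp
  -- a.e. x, κ x is concentrated on the fiber of x
  have hfib : ∀ᵐ x ∂(P_Z.map g), κ x (g ⁻¹' {x}) = 1 := by
    have hcomp : ∫⁻ x, κ x (Prod.mk x ⁻¹' {p : X × Z | g p.2 = p.1}) ∂μ.fst = 1 := by
      rw [← Measure.compProd_apply hD, hdis, hμD]
    have hmeas : Measurable (fun x => κ x (Prod.mk x ⁻¹' {p : X × Z | g p.2 = p.1})) :=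
      ProbabilityTheory.Kernel.measurable_kernel_prodMk_left hD
    have hle : ∀ x, κ x (Prod.mk x ⁻¹' {p : X × Z | g p.2 = p.1}) ≤ 1 := fun x =>
      prob_le_one
    have hzero : ∫⁻ x, (1 - κ x (Prod.mk x ⁻¹' {p : X × Z | g p.2 = p.1})) ∂μ.fst = 0 := by
      rw [lintegral_sub hmeas (by rw [hcomp]; exact one_ne_top)
        (Filter.Eventually.of_forall hle), hcomp, lintegral_one, measure_univ, tsub_self]
    have hae := (lintegral_eq_zero_iff (measurable_const.sub hmeas)).mp hzero
    rw [← hμfst]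
    filter_upwards [hae] with x hx
    have : (1 : ℝ≥0∞) ≤ κ x (Prod.mk x ⁻¹' {p : X × Z | g p.2 = p.1}) :=
      tsub_eq_zero_iff_le.mp hx
    have heq : κ x (Prod.mk x ⁻¹' {p : X × Z | g p.2 = p.1}) = 1 :=
      le_antisymm (hle x) this
    have hset : Prod.mk x ⁻¹' {p : X × Z | g p.2 = p.1} = g ⁻¹' {x} := by
      ext z; simp [Set.mem_preimage, Set.mem_singleton_iff, eq_comm]
    rwa [hset] at heq
  have hfibπ : ∀ᵐ p ∂π, κ p.2 (g ⁻¹' {p.2}) = 1 := by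
    rw [← hπ₂] at hfib
    exact ae_of_ae_map measurable_snd.aemeasurable hfib
  -- build the lift
  set η : ProbabilityTheory.Kernel (X × X) Z := κ.comap Prod.snd measurable_snd with hηdef
  haveI : ProbabilityTheory.IsMarkovKernel η := ProbabilityTheory.Kernel.IsMarkovKernel.comap _ measurable_snd
  set ρ' : Measure ((X × X) × Z) := π ⊗ₘ η with hρ'def
  haveI : IsProbabilityMeasure ρ' := by rw [hρ'def]; infer_instance
  set ρ : Measure (X × Z) := ρ'.map (fun q => (q.1.1, q.2)) with hρdef
  have hqmeas : Measurable (fun q : (X × X) × Z => (q.1.1, q.2)) :=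
    (measurable_fst.fst).prodMk measurable_snd
  haveI : IsProbabilityMeasure ρ := Measure.isProbabilityMeasure_map hqmeas.aemeasurable
  have hρfst : ρ.map Prod.fst = P_X := by
    rw [hρdef, Measure.map_map measurable_fst hqmeas]
    have : (Prod.fst ∘ fun q : (X × X) × Z => (q.1.1, q.2)) =
        Prod.fst ∘ (Prod.fst : (X × X) × Z → X × X) := rfl
    rw [this, ← Measure.map_map measurable_fst measurable_fst]
    have : ρ'.map Prod.fst = π := by
      rw [hρ'def, ← Measure.fst, Measure.fst_compProd]
    rw [this, hπ₁]
  have hρsnd : ρ.map Prod.snd = P_Z := by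
    rw [hρdef, Measure.map_map measurable_snd hqmeas]
    have heq : (Prod.snd ∘ fun q : (X × X) × Z => (q.1.1, q.2)) =
        (Prod.snd : (X × X) × Z → Z) := rfl
    rw [heq]
    ext s hs
    rw [Measure.map_apply measurable_snd hs, hρ'def,
      Measure.compProd_apply (measurable_snd hs)]
    have h1 : ∫⁻ p : X × X, η p (Prod.mk p ⁻¹' (Prod.snd ⁻¹' s)) ∂π
        = ∫⁻ p : X × X, κ p.2 s ∂π := by
      apply lintegral_congr
      intro p
      rw [hηdef, ProbabilityTheory.Kernel.comap_apply]
      rfl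
    rw [h1]
    have h2 : ∫⁻ p : X × X, κ p.2 s ∂π = ∫⁻ x, κ x s ∂(π.map Prod.snd) := by
      rw [lintegral_map (ProbabilityTheory.Kernel.measurable_coe κ hs) measurable_snd]
    rw [h2, hπ₂, ← hμfst]
    have h3 : μ (Prod.snd ⁻¹' s) = ∫⁻ x, κ x s ∂μ.fst := by
      conv_lhs => rw [← hdis]
      rw [Measure.compProd_apply (measurable_snd hs)]
      rfl
    rw [← h3, hμdef, Measure.map_apply hgz (measurable_snd hs)]
    rfl
  have hgm : Measurable (fun p : X × Z => (p.1, g p.2)) :=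
    measurable_fst.prodMk (hg.comp measurable_snd)
  have hρmap : ρ.map (fun p : X × Z => (p.1, g p.2)) = π := by
    rw [hρdef, Measure.map_map hgm hqmeas]
    have heq : ((fun p : X × Z => (p.1, g p.2)) ∘ fun q : (X × X) × Z => (q.1.1, q.2)) =
        fun q : (X × X) × Z => (q.1.1, g q.2) := rfl
    rw [heq]
    ext s hs
    have hFmeas : Measurable (fun q : (X × X) × Z => (q.1.1, g q.2)) :=
      (measurable_fst.fst).prodMk (hg.comp measurable_snd)
    rw [Measure.map_apply hFmeas hs, hρ'def,
      Measure.compProd_apply (hFmeas hs)]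
    have hcong : ∀ᵐ p : X × X ∂π,
        η p (Prod.mk p ⁻¹' ((fun q : (X × X) × Z => (q.1.1, g q.2)) ⁻¹' s))
          = s.indicator (fun _ => (1 : ℝ≥0∞)) p := by
      filter_upwards [hfibπ] with p hp
      rw [hηdef, ProbabilityTheory.Kernel.comap_apply]
      have hnull : κ p.2 ((g ⁻¹' {p.2})ᶜ) = 0 := by
        have := measure_compl (μ := κ p.2) (hg (measurableSet_singleton p.2)) (measure_ne_top _ _)
        rw [this, hp, measure_univ, tsub_self]
      have hsec : Prod.mk p ⁻¹' ((fun q : (X × X) × Z => (q.1.1, g q.2)) ⁻¹' s)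
          = {z | (p.1, g z) ∈ s} := rfl
      rw [hsec, ← measure_inter_conull hnull]
      by_cases hps : p ∈ s
      · have : {z | (p.1, g z) ∈ s} ∩ g ⁻¹' {p.2} = g ⁻¹' {p.2} := by
          ext z
          simp only [Set.mem_inter_iff, Set.mem_setOf_eq, Set.mem_preimage,
            Set.mem_singleton_iff, and_iff_right_iff_imp]
          intro hz
          rw [hz]
          simpa using hps
        rw [this, hp, Set.indicator_of_mem hps]
      · have : {z | (p.1, g z) ∈ s} ∩ g ⁻¹' {p.2} = ∅ := by
          ext z
          simp only [Set.mem_inter_iff, Set.mem_setOf_eq, Set.mem_preimage,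
            Set.mem_singleton_iff, Set.mem_empty_iff_false, iff_false, not_and]
          intro hz hzz
          rw [hzz] at hz
          exact hps (by simpa using hz)
        rw [this, measure_empty, Set.indicator_of_notMem hps]
    rw [lintegral_congr_ae hcong, lintegral_indicator hs]
    simp
  refine ⟨ρ, inferInstance, hρfst, hρsnd, hρmap, fun c hc => ?_⟩
  rw [← hρmap, lintegral_map hc hgm]
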